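/- Let V_1 ∈ Gr_l(m) and W ∈ Gr_q(m) with 1 ≤ q ≤ l ≤ m and suppose every line in W is at distance at least ε > 0 (in the metric d on projective lines given by operator-norm distance of orthogonal projections) from every line in the orthogonal complement V_1^⊥. Then there exists δ = δ(ε) > 0 such that for any linear isometry F : ℝ^l → V_1, the q-th singular value of π_W ∘ F is at least δ, where π_W is (a coordinate identification of) the orthogonal projection onto W. -/

import Mathlib

/-- The orthogonal projection onto a subspace `K` of `ℝ^m`, as an endomorphism of `ℝ^m`. -/
noncomputable def projL {m : ℕ} (K : Submodule ℝ (EuclideanSpace ℝ (Fin m))) :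
    EuclideanSpace ℝ (Fin m) →L[ℝ] EuclideanSpace ℝ (Fin m) :=
  K.subtypeL.comp (K.orthogonalProjection)

/-- `κ(V₁,V₂)`: the infimum over lines `L₁ ⊆ V₁`, `L₂ ⊆ V₂` of the projective distance
`‖P_{L₁} − P_{L₂}‖_op`. -/
noncomputable def kappa {m : ℕ} (V₁ V₂ : Submodule ℝ (EuclideanSpace ℝ (Fin m))) : ℝ :=
  ⨅ p : {L : Submodule ℝ (EuclideanSpace ℝ (Fin m)) // L ≤ V₁ ∧ Module.finrank ℝ L = 1} ×
      {L : Submodule ℝ (EuclideanSpace ℝ (Fin m)) // L ≤ V₂ ∧ Module.finrank ℝ L = 1},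
    ‖projL p.1.1 - projL p.2.1‖

/-- The `l`-th singular value of a linear map `T : ℝ^d → ℝ^m`, via the min-max
characterization. -/
noncomputable def singVal {d m : ℕ}
    (T : EuclideanSpace ℝ (Fin d) →ₗ[ℝ] EuclideanSpace ℝ (Fin m)) (l : ℕ) : ℝ :=
  ⨅ V : {V : Submodule ℝ (EuclideanSpace ℝ (Fin d)) // Module.finrank ℝ V = d + 1 - l},
    ⨆ x : {x : EuclideanSpace ℝ (Fin d) // x ∈ V.1 ∧ ‖x‖ = 1}, ‖T x‖

open Module Submodule
local notation "⟪" x ", " y "⟫" => @inner ℝ _ _ x y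

variable {m : ℕ}
local notation "E" => EuclideanSpace ℝ (Fin m)

lemma projL_apply (K : Submodule ℝ (EuclideanSpace ℝ (Fin m))) (x : E) :
    projL K x = (orthogonalProjection K x : E) := rfl

lemma projL_singleton {u : E} (hu : ‖u‖ = 1) (x : E) :
    projL (ℝ ∙ u) x = ⟪u, x⟫ • u := by
  rw [show projL (ℝ ∙ u) x = (ℝ ∙ u).starProjection x from rfl, starProjection_singleton (𝕜 := ℝ), hu]
  norm_num

lemma key_ineq {u v : E} (x : E) (hu : ‖u‖ = 1) (hv : ‖v‖ = 1)
    (hc : ⟪u, v⟫ ^ 2 < 1) :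
    ‖⟪u, x⟫ • u - ⟪v, x⟫ • v‖ ≤ Real.sqrt (1 - ⟪u, v⟫ ^ 2) * ‖x‖ := by
  set a := ⟪u, x⟫ with ha
  set b := ⟪v, x⟫ with hb
  set c := ⟪u, v⟫ with hcc
  have hs : (0:ℝ) < 1 - c ^ 2 := by linarith
  set z : E := (1 - c ^ 2) • x - (a - b * c) • u - (b - a * c) • v with hz
  have hz0 : (0:ℝ) ≤ ⟪z, z⟫ := real_inner_self_nonneg
  have hxu : ⟪x, u⟫ = a := (real_inner_comm u x).trans ha.symm
  have hxv : ⟪x, v⟫ = b := (real_inner_comm v x).trans hb.symm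
  have hvu : ⟪v, u⟫ = c := (real_inner_comm u v).trans hcc.symm
  have e1 : ⟪z, z⟫ = (1 - c ^ 2) ^ 2 * ‖x‖ ^ 2
      - (1 - c ^ 2) * (a ^ 2 + b ^ 2 - 2 * a * b * c) := by
    simp only [hz, inner_sub_left, inner_sub_right, real_inner_smul_left,
      real_inner_smul_right, hxu, hxv, hvu,
      real_inner_self_eq_norm_sq, norm_smul, Real.norm_eq_abs, mul_pow, sq_abs,
      ← ha, ← hb, ← hcc, hu, hv]
    ring
  rw [e1] at hz0
  have hD : a ^ 2 + b ^ 2 - 2 * a * b * c ≤ (1 - c ^ 2) * ‖x‖ ^ 2 := by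
    have h2 : (1 - c ^ 2) * (a ^ 2 + b ^ 2 - 2 * a * b * c)
        ≤ (1 - c ^ 2) * ((1 - c ^ 2) * ‖x‖ ^ 2) := by nlinarith
    exact le_of_mul_le_mul_left h2 hs
  have hnorm : ‖a • u - b • v‖ ^ 2 = a ^ 2 + b ^ 2 - 2 * a * b * c := by
    rw [norm_sub_sq_real, norm_smul, norm_smul, real_inner_smul_left, real_inner_smul_right]
    simp only [Real.norm_eq_abs, mul_pow, sq_abs, ← hcc, hu, hv]
    ring
  have h3 : ‖a • u - b • v‖ ^ 2 ≤ (Real.sqrt (1 - c ^ 2) * ‖x‖) ^ 2 := by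
    rw [hnorm, mul_pow, Real.sq_sqrt hs.le]
    exact hD
  have h4 : (0:ℝ) ≤ Real.sqrt (1 - c ^ 2) * ‖x‖ :=
    mul_nonneg (Real.sqrt_nonneg _) (norm_nonneg _)
  nlinarith [norm_nonneg (a • u - b • v)]

lemma opnorm_bound {u v : E} (hu : ‖u‖ = 1) (hv : ‖v‖ = 1)
    (hc : ⟪u, v⟫ ^ 2 < 1) :
    ‖projL (ℝ ∙ u) - projL (ℝ ∙ v)‖ ≤ Real.sqrt (1 - ⟪u, v⟫ ^ 2) := by
  refine ContinuousLinearMap.opNorm_le_bound _ (Real.sqrt_nonneg _) fun x => ?_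
  rw [ContinuousLinearMap.sub_apply, projL_singleton hu, projL_singleton hv]
  exact key_ineq x hu hv hc

lemma kappa_le {W V₂ L₁ L₂ : Submodule ℝ (EuclideanSpace ℝ (Fin m))}
    (h1 : L₁ ≤ W ∧ Module.finrank ℝ L₁ = 1) (h2 : L₂ ≤ V₂ ∧ Module.finrank ℝ L₂ = 1) :
    kappa W V₂ ≤ ‖projL L₁ - projL L₂‖ := by
  have hb : BddBelow (Set.range fun p :
      {L : Submodule ℝ (EuclideanSpace ℝ (Fin m)) // L ≤ W ∧ Module.finrank ℝ L = 1} ×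
      {L : Submodule ℝ (EuclideanSpace ℝ (Fin m)) // L ≤ V₂ ∧ Module.finrank ℝ L = 1} =>
      ‖projL p.1.1 - projL p.2.1‖) := by
    refine ⟨0, ?_⟩
    rintro x ⟨p, rfl⟩
    exact norm_nonneg _
  exact ciInf_le hb (⟨⟨L₁, h1⟩, ⟨L₂, h2⟩⟩)

lemma disjoint_of_kappa {W V₂ : Submodule ℝ (EuclideanSpace ℝ (Fin m))} {ε : ℝ}
    (hε : 0 < ε) (hk : ε ≤ kappa W V₂) : W ⊓ V₂ = ⊥ := by
  by_contra h
  obtain ⟨u, hu, hune⟩ := Submodule.exists_mem_ne_zero_of_ne_bot h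
  have h1 : (ℝ ∙ u) ≤ W ∧ Module.finrank ℝ (ℝ ∙ u) = 1 :=
    ⟨(Submodule.span_singleton_le_iff_mem u W).2 (hu.1), finrank_span_singleton hune⟩
  have h2 : (ℝ ∙ u) ≤ V₂ ∧ Module.finrank ℝ (ℝ ∙ u) = 1 :=
    ⟨(Submodule.span_singleton_le_iff_mem u V₂).2 (hu.2), finrank_span_singleton hune⟩
  have := le_trans hk (kappa_le h1 h2)
  rw [sub_self, norm_zero] at this
  linarith

lemma proj_lower {W V₁ : Submodule ℝ (EuclideanSpace ℝ (Fin m))} {ε : ℝ}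
    (hε : 0 < ε) (hk : ε ≤ kappa W V₁ᗮ) {u : E} (hu : u ∈ W) (hu1 : ‖u‖ = 1) :
    min ε 1 ≤ ‖(orthogonalProjection V₁ u : E)‖ := by
  have hpyth := norm_sq_eq_add_norm_sq_projection u V₁
  rw [hu1, one_pow] at hpyth
  set p : E := (orthogonalProjection V₁ᗮ u : E) with hp
  have hnp : ‖(orthogonalProjection V₁ᗮ u)‖ = ‖p‖ := rfl
  by_cases hp0 : p = 0
  · have : ‖(orthogonalProjection V₁ u : E)‖ ^ 2 = 1 := by
      have : ‖p‖ = 0 := by rw [hp0, norm_zero]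
      rw [hnp, this] at hpyth
      have h1 : ‖(orthogonalProjection V₁ u)‖ = ‖(orthogonalProjection V₁ u : E)‖ := rfl
      rw [h1] at hpyth; linarith
    nlinarith [norm_nonneg ((orthogonalProjection V₁ u : E)), min_le_right ε 1,
      le_min hε.le zero_le_one]
  · set v : E := ‖p‖⁻¹ • p with hv
    have hpn : (0:ℝ) < ‖p‖ := norm_pos_iff.2 hp0
    have hv1 : ‖v‖ = 1 := by
      rw [hv, norm_smul, Real.norm_eq_abs, abs_inv, abs_of_pos hpn, inv_mul_cancel₀ hpn.ne']
    have hvmem : v ∈ V₁ᗮ := Submodule.smul_mem _ _ (by exact (orthogonalProjection V₁ᗮ u).2)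
    have hpmem : p ∈ V₁ᗮ := (orthogonalProjection V₁ᗮ u).2
    have hiup : ⟪u, p⟫ = ‖p‖ ^ 2 := by
      have h1 : u - p ∈ V₁ᗮᗮ := sub_starProjection_mem_orthogonal u
      have h2 : ⟪p, u - p⟫ = 0 := (Submodule.mem_orthogonal V₁ᗮ (u - p)).1 h1 p hpmem
      have h3 : ⟪p, u⟫ = ⟪p, u - p⟫ + ⟪p, p⟫ := by
        rw [← inner_add_right]
        norm_num
      rw [real_inner_comm p u, h3, h2, real_inner_self_eq_norm_sq]; ring
    have hc : ⟪u, v⟫ = ‖p‖ := by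
      rw [hv, real_inner_smul_right, hiup]
      field_simp
    have hq1 : ‖(orthogonalProjection V₁ u)‖ = ‖(orthogonalProjection V₁ u : E)‖ := rfl
    rw [hnp, hq1] at hpyth
    have hple : ‖p‖ ≤ 1 := by nlinarith [norm_nonneg (orthogonalProjection V₁ u : E)]
    rcases lt_or_eq_of_le hple with hplt | hpeq
    · -- ‖p‖ < 1
      have hcsq : ⟪u, v⟫ ^ 2 < 1 := by rw [hc]; nlinarith
      have hune : u ≠ 0 := by intro h; rw [h, norm_zero] at hu1; linarith
      have hvne : v ≠ 0 := by intro h; rw [h, norm_zero] at hv1; linarith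
      have h1 : (ℝ ∙ u) ≤ W ∧ Module.finrank ℝ (ℝ ∙ u) = 1 :=
        ⟨(Submodule.span_singleton_le_iff_mem u W).2 hu, finrank_span_singleton hune⟩
      have h2 : (ℝ ∙ v) ≤ V₁ᗮ ∧ Module.finrank ℝ (ℝ ∙ v) = 1 :=
        ⟨(Submodule.span_singleton_le_iff_mem v V₁ᗮ).2 hvmem, finrank_span_singleton hvne⟩
      have hεb : ε ≤ Real.sqrt (1 - ⟪u, v⟫ ^ 2) :=
        le_trans hk (le_trans (kappa_le h1 h2) (opnorm_bound hu1 hv1 hcsq))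
      have hsq : ε ^ 2 ≤ 1 - ⟪u, v⟫ ^ 2 := by
        have h3 := pow_le_pow_left₀ hε.le hεb 2
        rwa [Real.sq_sqrt (by linarith)] at h3
      rw [hc] at hsq
      have hmin : 0 < min ε 1 := lt_min hε one_pos
      nlinarith [norm_nonneg (orthogonalProjection V₁ u : E), min_le_left ε 1,
        min_le_right ε 1]
    · -- ‖p‖ = 1 : then u = v ∈ V₁ᗮ, contradiction with kappa ≥ ε
      exfalso
      have huv : u = v := by
        rw [← inner_eq_one_iff_of_norm_eq_one hu1 hv1 (𝕜 := ℝ)]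
        rw [hc, ← hpeq]
      have humem : u ∈ W ⊓ V₁ᗮ := ⟨hu, huv ▸ hvmem⟩
      have hbot := disjoint_of_kappa hε hk
      rw [hbot] at humem
      have : u = 0 := humem
      rw [this, norm_zero] at hu1
      linarith

lemma exists_finrank (k n : ℕ) (h : k ≤ n) :
    ∃ V : Submodule ℝ (EuclideanSpace ℝ (Fin n)), Module.finrank ℝ V = k := by
  let b := (EuclideanSpace.basisFun (Fin n) ℝ).toBasis
  have li : LinearIndependent ℝ (fun i : Fin k => b (Fin.castLE h i)) :=
    b.linearIndependent.comp (Fin.castLE h) (Fin.castLE_injective h)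
  refine ⟨Submodule.span ℝ (Set.range fun i : Fin k => b (Fin.castLE h i)), ?_⟩
  rw [finrank_span_eq_card li, Fintype.card_fin]

lemma finrank_map_subtype_comp {n n' : ℕ}
    (f : EuclideanSpace ℝ (Fin n) →ₗ[ℝ] EuclideanSpace ℝ (Fin n'))
    (W : Submodule ℝ (EuclideanSpace ℝ (Fin n)))
    (hker : ∀ x ∈ W, f x = 0 → x = 0) :
    Module.finrank ℝ (W.map f) = Module.finrank ℝ W := by
  have h1 : W.map f = LinearMap.range (f.comp W.subtype) := by
    rw [LinearMap.range_comp, Submodule.range_subtype]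
  have hinj : Function.Injective (f.comp W.subtype) := by
    rw [← LinearMap.ker_eq_bot]
    ext x
    simp only [LinearMap.mem_ker, LinearMap.comp_apply, Submodule.mem_bot]
    constructor
    · intro hx
      exact Subtype.ext (hker x x.2 hx)
    · intro hx; rw [hx]; simp
  rw [h1, LinearMap.finrank_range_of_inj hinj]


/-- If every line of `W ∈ Gr_q(m)` is at distance `≥ ε` from every line of `V₁^⊥`
(`V₁ ∈ Gr_l(m)`), then there is `δ = δ(ε) > 0` such that for every linear isometry
`F : ℝ^l → V₁`, the `q`-th singular value of `π_W ∘ F` is at least `δ`. -/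
theorem exists_delta_singVal_proj_comp {m l q : ℕ} (hq : 1 ≤ q) (hql : q ≤ l) (hlm : l ≤ m)
    {ε : ℝ} (hε : 0 < ε) :
    ∃ δ : ℝ, 0 < δ ∧ ∀ (V₁ W : Submodule ℝ (EuclideanSpace ℝ (Fin m))),
      Module.finrank ℝ V₁ = l → Module.finrank ℝ W = q →
      ε ≤ kappa W V₁ᗮ →
      ∀ (g : W ≃ₗᵢ[ℝ] EuclideanSpace ℝ (Fin q))
        (F : EuclideanSpace ℝ (Fin l) →ₗᵢ[ℝ] EuclideanSpace ℝ (Fin m)),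
        LinearMap.range F.toLinearMap = V₁ →
        δ ≤ singVal (g.toLinearEquiv.toLinearMap.comp
          (((orthogonalProjection W).toLinearMap).comp F.toLinearMap)) q := by
  refine ⟨min ε 1, lt_min hε one_pos, ?_⟩
  intro V₁ W hV₁ hW hk g F hF
  have hdisj : W ⊓ V₁ᗮ = ⊥ := disjoint_of_kappa hε hk
  set T := g.toLinearEquiv.toLinearMap.comp
      (((orthogonalProjection W).toLinearMap).comp F.toLinearMap) with hT
  haveI hne : Nonempty {V : Submodule ℝ (EuclideanSpace ℝ (Fin l)) //
      Module.finrank ℝ V = l + 1 - q} := by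
    obtain ⟨V, hV⟩ := exists_finrank (l + 1 - q) l (by omega)
    exact ⟨⟨V, hV⟩⟩
  unfold singVal
  refine le_ciInf ?_
  rintro ⟨V, hV⟩
  -- the two subspaces of V₁
  set A : Submodule ℝ (EuclideanSpace ℝ (Fin m)) :=
    W.map ((projL V₁ : EuclideanSpace ℝ (Fin m) →L[ℝ] EuclideanSpace ℝ (Fin m)) :
      EuclideanSpace ℝ (Fin m) →ₗ[ℝ] EuclideanSpace ℝ (Fin m)) with hA
  set B : Submodule ℝ (EuclideanSpace ℝ (Fin m)) := V.map F.toLinearMap with hB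
  have hAle : A ≤ V₁ := by
    rintro _ ⟨w, hw, rfl⟩
    exact (orthogonalProjection V₁ w).2
  have hBle : B ≤ V₁ := by
    rintro _ ⟨x, hx, rfl⟩
    rw [← hF]
    exact ⟨x, rfl⟩
  have hArk : Module.finrank ℝ A = q := by
    rw [hA, finrank_map_subtype_comp _ _ ?_, hW]
    intro x hxW hx0
    have hxperp : x ∈ V₁ᗮ := by
      refine orthogonalProjection_eq_zero_iff.1 ?_
      exact Subtype.ext hx0
    have hmem : x ∈ W ⊓ V₁ᗮ := ⟨hxW, hxperp⟩
    rw [hdisj] at hmem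
    exact hmem
  have hBrk : Module.finrank ℝ B = l + 1 - q := by
    rw [hB, finrank_map_subtype_comp _ _ ?_, hV]
    intro x _ hx0
    apply F.injective
    rw [map_zero]
    exact hx0
  have hsup : Module.finrank ℝ (A ⊔ B : Submodule ℝ (EuclideanSpace ℝ (Fin m))) ≤ l := by
    rw [← hV₁]
    exact Submodule.finrank_mono (sup_le hAle hBle)
  have hsum := Submodule.finrank_sup_add_finrank_inf_eq A B
  have hipos : 0 < Module.finrank ℝ (A ⊓ B : Submodule ℝ (EuclideanSpace ℝ (Fin m))) := by
    omega
  obtain ⟨y0, hy0ne⟩ := Module.finrank_pos_iff_exists_ne_zero.1 hipos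
  have hyA : (y0 : EuclideanSpace ℝ (Fin m)) ∈ A := y0.2.1
  have hyB : (y0 : EuclideanSpace ℝ (Fin m)) ∈ B := y0.2.2
  set y : EuclideanSpace ℝ (Fin m) := (y0 : EuclideanSpace ℝ (Fin m)) with hy
  have hyne : y ≠ 0 := fun h => hy0ne (Subtype.ext h)
  obtain ⟨u₀, hu₀W, hu₀y⟩ := hyA
  obtain ⟨xv, hxvV, hxvy⟩ := hyB
  have hu₀ne : u₀ ≠ 0 := by
    rintro rfl
    apply hyne
    rw [← hu₀y]
    simp
  have hyn : (0:ℝ) < ‖y‖ := norm_pos_iff.2 hyne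
  have hu₀n : (0:ℝ) < ‖u₀‖ := norm_pos_iff.2 hu₀ne
  set uhat : EuclideanSpace ℝ (Fin m) := ‖u₀‖⁻¹ • u₀ with huhat
  have huhatW : uhat ∈ W := Submodule.smul_mem _ _ hu₀W
  have huhat1 : ‖uhat‖ = 1 := by
    rw [huhat, norm_smul, Real.norm_eq_abs, abs_inv, abs_of_pos hu₀n, inv_mul_cancel₀ hu₀n.ne']
  have huyE : (orthogonalProjection V₁ u₀ : EuclideanSpace ℝ (Fin m)) = y := hu₀y
  have hproj : (orthogonalProjection V₁ uhat : EuclideanSpace ℝ (Fin m)) = ‖u₀‖⁻¹ • y := by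
    rw [huhat, map_smul, Submodule.coe_smul, huyE]
  have hδρ : min ε 1 ≤ ‖u₀‖⁻¹ * ‖y‖ := by
    have h5 := proj_lower hε hk huhatW huhat1
    rwa [hproj, norm_smul, Real.norm_eq_abs, abs_inv, abs_of_pos hu₀n] at h5
  -- the unit test vector
  set x₀ : EuclideanSpace ℝ (Fin l) := ‖y‖⁻¹ • xv with hx₀
  have hx₀V : x₀ ∈ V := Submodule.smul_mem _ _ hxvV
  have hFx₀ : F.toLinearMap x₀ = ‖y‖⁻¹ • y := by rw [hx₀, map_smul, hxvy]
  have hx₀1 : ‖x₀‖ = 1 := by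
    have : ‖F.toLinearMap x₀‖ = ‖x₀‖ := F.norm_map x₀
    rw [← this, hFx₀, norm_smul, Real.norm_eq_abs, abs_inv, abs_of_pos hyn,
      inv_mul_cancel₀ hyn.ne']
  -- inner product computation
  have hyu₀ : ⟪y, u₀⟫ = ‖y‖ ^ 2 := by
    have hperp : u₀ - y ∈ V₁ᗮ := by
      have : u₀ - (orthogonalProjection V₁ u₀ : EuclideanSpace ℝ (Fin m)) ∈ V₁ᗮ :=
        sub_starProjection_mem_orthogonal (K := V₁) u₀
      rwa [huyE] at this
    have hyV₁ : y ∈ V₁ := by rw [← huyE]; exact (orthogonalProjection V₁ u₀).2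
    have h0 : ⟪y, u₀ - y⟫ = 0 := (Submodule.mem_orthogonal V₁ (u₀ - y)).1 hperp y hyV₁
    have h1 : ⟪y, u₀⟫ = ⟪y, u₀ - y⟫ + ⟪y, y⟫ := by
      rw [← inner_add_right]
      norm_num
    rw [h1, h0, real_inner_self_eq_norm_sq]
    ring
  set w : EuclideanSpace ℝ (Fin m) :=
    (orthogonalProjection W (‖y‖⁻¹ • y) : EuclideanSpace ℝ (Fin m)) with hw
  have hinner : ⟪(‖y‖⁻¹ • y : EuclideanSpace ℝ (Fin m)), uhat⟫ = ‖u₀‖⁻¹ * ‖y‖ := by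
    rw [real_inner_smul_left, huhat, real_inner_smul_right, hyu₀]
    field_simp
  have hwle : ⟪(‖y‖⁻¹ • y : EuclideanSpace ℝ (Fin m)), uhat⟫ ≤ ‖w‖ := by
    have hperp : (‖y‖⁻¹ • y) - w ∈ Wᗮ := by
      rw [hw]
      exact sub_starProjection_mem_orthogonal (K := W) _
    have h0 : ⟪uhat, (‖y‖⁻¹ • y) - w⟫ = 0 :=
      (Submodule.mem_orthogonal W _).1 hperp uhat huhatW
    have h1 : ⟪(‖y‖⁻¹ • y : EuclideanSpace ℝ (Fin m)), uhat⟫ = ⟪w, uhat⟫ := by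
      have h2 : ⟪(‖y‖⁻¹ • y : EuclideanSpace ℝ (Fin m)), uhat⟫
          = ⟪w, uhat⟫ + ⟪(‖y‖⁻¹ • y) - w, uhat⟫ := by
        rw [← inner_add_left]
        norm_num
      rw [h2, (real_inner_comm _ _).trans h0]
      ring
    rw [h1]
    calc ⟪w, uhat⟫ ≤ ‖w‖ * ‖uhat‖ := real_inner_le_norm w uhat
    _ = ‖w‖ := by rw [huhat1, mul_one]
  have hTx₀ : ‖T x₀‖ = ‖w‖ := by
    rw [hT]
    simp only [LinearMap.comp_apply, LinearEquiv.coe_coe,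
      LinearIsometryEquiv.coe_toLinearEquiv, ContinuousLinearMap.coe_coe]
    rw [g.norm_map]
    rw [hw, hFx₀]
    rfl
  have hfinal : min ε 1 ≤ ‖T x₀‖ := by
    rw [hTx₀]
    calc min ε 1 ≤ ‖u₀‖⁻¹ * ‖y‖ := hδρ
    _ = ⟪(‖y‖⁻¹ • y : EuclideanSpace ℝ (Fin m)), uhat⟫ := hinner.symm
    _ ≤ ‖w‖ := hwle
  -- conclude via le_ciSup
  have hbdd : BddAbove (Set.range fun x : {x : EuclideanSpace ℝ (Fin l) //
      x ∈ V ∧ ‖x‖ = 1} => ‖T x‖) := by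
    refine ⟨‖LinearMap.toContinuousLinearMap T‖, ?_⟩
    rintro _ ⟨x, rfl⟩
    dsimp only
    have h1 : ‖T (x : EuclideanSpace ℝ (Fin l))‖
        = ‖LinearMap.toContinuousLinearMap T (x : EuclideanSpace ℝ (Fin l))‖ := by
      simp
    rw [h1]
    calc ‖LinearMap.toContinuousLinearMap T (x : EuclideanSpace ℝ (Fin l))‖
        ≤ ‖LinearMap.toContinuousLinearMap T‖ * ‖(x : EuclideanSpace ℝ (Fin l))‖ :=
          (LinearMap.toContinuousLinearMap T).le_opNorm _
    _ = ‖LinearMap.toContinuousLinearMap T‖ := by rw [x.2.2, mul_one]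
  exact le_trans hfinal (le_ciSup hbdd ⟨x₀, hx₀V, hx₀1⟩)
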